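/- Let E and F be Hilbert spaces and (A_α)_{α∈ℕ} a countable family of bounded linear operators from E to F. Assume there exists R > 0 such that sup_α Σ_β ‖A_α* A_β‖^{1/2} ≤ R and sup_α Σ_β ‖A_α A_β*‖^{1/2} ≤ R. Then the sum A = Σ_α A_α converges strongly to a bounded operator with ‖A‖ ≤ R. -/

import Mathlib

open scoped InnerProductSpace

namespace CotlarSteinAux

open ContinuousLinearMap

variable {E F : Type*} [NormedAddCommGroup E] [InnerProductSpace ℂ E] [CompleteSpace E]
  [NormedAddCommGroup F] [InnerProductSpace ℂ F] [CompleteSpace F]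

variable (A : ℕ → E →L[ℂ] F)

/-- `c j k = ‖A_j* A_k‖`. -/
noncomputable def cc (j k : ℕ) : ℝ := ‖(adjoint (A j)).comp (A k)‖

/-- `d j k = ‖A_j A_k*‖`. -/
noncomputable def dd (j k : ℕ) : ℝ := ‖(A j).comp (adjoint (A k))‖

lemma cc_nonneg (j k : ℕ) : 0 ≤ cc A j k := norm_nonneg _
lemma dd_nonneg (j k : ℕ) : 0 ≤ dd A j k := norm_nonneg _

lemma dd_symm (j k : ℕ) : dd A j k = dd A k j := by
  have : (A k).comp (adjoint (A j)) = adjoint ((A j).comp (adjoint (A k))) := by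
    rw [adjoint_comp, adjoint_adjoint]
  rw [dd, dd, this]
  exact ((adjoint : (F →L[ℂ] F) ≃ₗᵢ⋆[ℂ] (F →L[ℂ] F)).norm_map _).symm


/-- single factor `A_{p.1}* ∘ A_{p.2} : E →L E`. -/
noncomputable def gg (p : ℕ × ℕ) : E →L[ℂ] E := (adjoint (A p.1)).comp (A p.2)

/-- ordered product of factors. -/
noncomputable def pp (l : List (ℕ × ℕ)) : E →L[ℂ] E := (l.map (gg A)).prod

/-- re-associated product with dangling `A_b` on the left. -/
noncomputable def qq : ℕ → List (ℕ × ℕ) → (E →L[ℂ] F)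
  | b, [] => A b
  | b, p :: t => ((A b).comp (adjoint (A p.1))).comp (qq p.2 t)

noncomputable def w2 : ℕ → List (ℕ × ℕ) → ℝ
  | b, [] => ‖A b‖
  | b, p :: t => dd A b p.1 * w2 p.2 t

noncomputable def prodc (l : List (ℕ × ℕ)) : ℝ := (l.map fun p => cc A p.1 p.2).prod

noncomputable def chain : ℕ → List (ℕ × ℕ) → ℝ
  | b, [] => ‖A b‖
  | b, p :: t => dd A b p.1 * (cc A p.1 p.2 * chain p.2 t)

lemma pp_nil : pp A [] = 1 := rfl

lemma pp_cons (p : ℕ × ℕ) (l : List (ℕ × ℕ)) : pp A (p :: l) = (gg A p) * pp A l := by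
  simp [pp]

lemma w2_nonneg : ∀ b l, 0 ≤ w2 A b l
  | b, [] => norm_nonneg _
  | b, p :: t => mul_nonneg (dd_nonneg A _ _) (w2_nonneg p.2 t)

lemma chain_nonneg : ∀ b l, 0 ≤ chain A b l
  | b, [] => norm_nonneg _
  | b, p :: t => mul_nonneg (dd_nonneg A _ _)
      (mul_nonneg (cc_nonneg A _ _) (chain_nonneg p.2 t))

lemma prodc_nonneg : ∀ l, 0 ≤ prodc A l
  | [] => zero_le_one
  | p :: t => by
      rw [prodc, List.map_cons, List.prod_cons]
      exact mul_nonneg (cc_nonneg A _ _) (prodc_nonneg t)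

lemma prodc_mul_w2 : ∀ b l, prodc A l * w2 A b l = chain A b l
  | b, [] => one_mul _
  | b, p :: t => by
      rw [prodc, List.map_cons, List.prod_cons, w2, chain, ← prodc, ← prodc_mul_w2 p.2 t]
      ring

lemma pp_cons_eq : ∀ (t : List (ℕ × ℕ)) (p : ℕ × ℕ),
    pp A (p :: t) = (adjoint (A p.1)).comp (qq A p.2 t)
  | [], p => by
      rw [pp_cons, pp_nil, mul_one, gg, qq]
  | q :: t, p => by
      rw [pp_cons, pp_cons_eq t q, qq, mul_def, gg]
      rfl

lemma norm_qq_le : ∀ (b : ℕ) (t : List (ℕ × ℕ)), ‖qq A b t‖ ≤ w2 A b t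
  | b, [] => le_refl _
  | b, p :: t => by
      rw [qq, w2]
      calc ‖((A b).comp (adjoint (A p.1))).comp (qq A p.2 t)‖
          ≤ ‖(A b).comp (adjoint (A p.1))‖ * ‖qq A p.2 t‖ := opNorm_comp_le _ _
        _ ≤ dd A b p.1 * w2 A p.2 t := by
            exact mul_le_mul_of_nonneg_left (norm_qq_le p.2 t) (dd_nonneg A _ _)

lemma norm_pp_le1 : ∀ (t : List (ℕ × ℕ)) (p : ℕ × ℕ),
    ‖pp A (p :: t)‖ ≤ cc A p.1 p.2 * prodc A t
  | [], p => by
      rw [pp_cons, pp_nil, mul_one, prodc, List.map_nil, List.prod_nil, mul_one]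
      exact le_refl _
  | q :: t, p => by
      rw [pp_cons]
      calc ‖gg A p * pp A (q :: t)‖ ≤ ‖gg A p‖ * ‖pp A (q :: t)‖ := norm_mul_le _ _
        _ ≤ cc A p.1 p.2 * (cc A q.1 q.2 * prodc A t) := by
            refine mul_le_mul_of_nonneg_left (norm_pp_le1 t q) (norm_nonneg _)
        _ = cc A p.1 p.2 * prodc A (q :: t) := by
            simp [prodc]

lemma norm_pp_le2 (t : List (ℕ × ℕ)) (p : ℕ × ℕ) :
    ‖pp A (p :: t)‖ ≤ ‖A p.1‖ * w2 A p.2 t := by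
  rw [pp_cons_eq]
  calc ‖(adjoint (A p.1)).comp (qq A p.2 t)‖
      ≤ ‖adjoint (A p.1)‖ * ‖qq A p.2 t‖ := opNorm_comp_le _ _
    _ ≤ ‖A p.1‖ * w2 A p.2 t := by
        rw [(adjoint : (E →L[ℂ] F) ≃ₗᵢ⋆[ℂ] (F →L[ℂ] E)).norm_map]
        exact mul_le_mul_of_nonneg_left (norm_qq_le A p.2 t) (norm_nonneg _)

/-- Geometric-mean bound for a single word. -/
lemma norm_pp_le_sqrt (t : List (ℕ × ℕ)) (p : ℕ × ℕ) :
    ‖pp A (p :: t)‖ ≤ Real.sqrt (‖A p.1‖ * (cc A p.1 p.2 * chain A p.2 t)) := by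
  have h0 : (0:ℝ) ≤ ‖pp A (p :: t)‖ := norm_nonneg _
  have key : ‖pp A (p :: t)‖ * ‖pp A (p :: t)‖
      ≤ ‖A p.1‖ * (cc A p.1 p.2 * chain A p.2 t) := by
    have h1 := norm_pp_le1 A t p
    have h2 := norm_pp_le2 A t p
    calc ‖pp A (p :: t)‖ * ‖pp A (p :: t)‖
        ≤ (cc A p.1 p.2 * prodc A t) * (‖A p.1‖ * w2 A p.2 t) :=
          mul_le_mul h1 h2 h0 (mul_nonneg (cc_nonneg A _ _) (prodc_nonneg A t))
      _ = ‖A p.1‖ * (cc A p.1 p.2 * (prodc A t * w2 A p.2 t)) := by ring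
      _ = ‖A p.1‖ * (cc A p.1 p.2 * chain A p.2 t) := by rw [prodc_mul_w2]
  calc ‖pp A (p :: t)‖ = Real.sqrt (‖pp A (p :: t)‖ * ‖pp A (p :: t)‖) :=
        (Real.sqrt_mul_self h0).symm
    _ ≤ _ := Real.sqrt_le_sqrt key


section Rows

variable {A}
variable {R : ℝ}

lemma sqrt_cc_summable
    (hsum1 : ∀ α, Summable fun β => ‖(adjoint (A α)).comp (A β)‖ ^ ((1:ℝ)/2)) (j : ℕ) :
    Summable fun k => Real.sqrt (cc A j k) := by
  have := hsum1 j
  simpa only [cc, Real.sqrt_eq_rpow] using this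

lemma sqrt_dd_summable
    (hsum2 : ∀ α, Summable fun β => ‖(A α).comp (adjoint (A β))‖ ^ ((1:ℝ)/2)) (j : ℕ) :
    Summable fun k => Real.sqrt (dd A j k) := by
  have := hsum2 j
  simpa only [dd, Real.sqrt_eq_rpow] using this

lemma row_cc_le
    (hsum1 : ∀ α, Summable fun β => ‖(adjoint (A α)).comp (A β)‖ ^ ((1:ℝ)/2))
    (hbd1 : ∀ α, (∑' β, ‖(adjoint (A α)).comp (A β)‖ ^ ((1:ℝ)/2)) ≤ R)
    (j : ℕ) (S : Finset ℕ) : ∑ k ∈ S, Real.sqrt (cc A j k) ≤ R := by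
  refine le_trans (Summable.sum_le_tsum S (fun i _ => Real.sqrt_nonneg _) (sqrt_cc_summable hsum1 j)) ?_
  have : (∑' k, Real.sqrt (cc A j k)) = ∑' k, ‖(adjoint (A j)).comp (A k)‖ ^ ((1:ℝ)/2) := by
    refine tsum_congr fun k => ?_
    rw [cc, Real.sqrt_eq_rpow]
  rw [this]; exact hbd1 j

lemma row_dd_le
    (hsum2 : ∀ α, Summable fun β => ‖(A α).comp (adjoint (A β))‖ ^ ((1:ℝ)/2))
    (hbd2 : ∀ α, (∑' β, ‖(A α).comp (adjoint (A β))‖ ^ ((1:ℝ)/2)) ≤ R)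
    (j : ℕ) (S : Finset ℕ) : ∑ k ∈ S, Real.sqrt (dd A j k) ≤ R := by
  refine le_trans (Summable.sum_le_tsum S (fun i _ => Real.sqrt_nonneg _) (sqrt_dd_summable hsum2 j)) ?_
  have : (∑' k, Real.sqrt (dd A j k)) = ∑' k, ‖(A j).comp (adjoint (A k))‖ ^ ((1:ℝ)/2) := by
    refine tsum_congr fun k => ?_
    rw [dd, Real.sqrt_eq_rpow]
  rw [this]; exact hbd2 j

lemma norm_A_le
    (hsum1 : ∀ α, Summable fun β => ‖(adjoint (A α)).comp (A β)‖ ^ ((1:ℝ)/2))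
    (hbd1 : ∀ α, (∑' β, ‖(adjoint (A α)).comp (A β)‖ ^ ((1:ℝ)/2)) ≤ R)
    (j : ℕ) : ‖A j‖ ≤ R := by
  have h1 : Real.sqrt (cc A j j) = ‖A j‖ := by
    rw [cc, norm_adjoint_comp_self]
    exact Real.sqrt_mul_self (norm_nonneg _)
  have h2 : Real.sqrt (cc A j j) ≤ ∑' k, Real.sqrt (cc A j k) :=
    Summable.le_tsum (sqrt_cc_summable hsum1 j) j (fun k _ => Real.sqrt_nonneg _)
  have h3 : (∑' k, Real.sqrt (cc A j k)) ≤ R := by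
    have : (∑' k, Real.sqrt (cc A j k)) = ∑' k, ‖(adjoint (A j)).comp (A k)‖ ^ ((1:ℝ)/2) := by
      refine tsum_congr fun k => ?_
      rw [cc, Real.sqrt_eq_rpow]
    rw [this]; exact hbd1 j
  rw [← h1]; exact h2.trans h3

end Rows


lemma sum_piFinset_succ' {M α : Type*} [AddCommMonoid M] {n : ℕ} (s : Finset α)
    (g : (Fin (n+1) → α) → M) :
    ∑ f ∈ Fintype.piFinset (fun _ : Fin (n+1) => s), g f =
      ∑ p ∈ s, ∑ f ∈ Fintype.piFinset (fun _ : Fin n => s), g (Fin.cons p f) := by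
  rw [← Finset.sum_product']
  refine Finset.sum_bij' (fun f _ => (f 0, Fin.tail f)) (fun q _ => Fin.cons q.1 q.2)
    ?_ ?_ ?_ ?_ ?_
  · intro f hf
    rw [Fintype.mem_piFinset] at hf
    rw [Finset.mem_product]
    exact ⟨hf 0, by rw [Fintype.mem_piFinset]; intro i; exact hf i.succ⟩
  · intro q hq
    rw [Finset.mem_product] at hq
    rw [Fintype.mem_piFinset]
    intro i
    refine Fin.cases ?_ ?_ i
    · simpa using hq.1
    · intro j
      have := Fintype.mem_piFinset.mp hq.2 j
      simpa using this
  · intro f _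
    exact Fin.cons_self_tail f
  · intro q _
    simp [Fin.tail_cons]
  · intro f _
    rw [Fin.cons_self_tail]

lemma sum_piFinset_zero' {M α : Type*} [AddCommMonoid M] (s : Finset α)
    (g : (Fin 0 → α) → M) :
    ∑ f ∈ Fintype.piFinset (fun _ : Fin 0 => s), g f = g (fun i => i.elim0) := by
  have : Fintype.piFinset (fun _ : Fin 0 => s) = {fun i => i.elim0} := by
    ext f
    simp only [Fintype.mem_piFinset, Finset.mem_singleton]
    constructor
    · intro _; funext i; exact i.elim0
    · intro _ i; exact i.elim0
  rw [this, Finset.sum_singleton]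

lemma pow_expand {β Rg : Type*} [Semiring Rg] (s : Finset β) (G : β → Rg) :
    ∀ m : ℕ, (∑ p ∈ s, G p) ^ m =
      ∑ f ∈ Fintype.piFinset (fun _ : Fin m => s), (List.ofFn fun i => G (f i)).prod
  | 0 => by
      rw [pow_zero, sum_piFinset_zero']
      simp
  | m + 1 => by
      rw [pow_succ', pow_expand s G m, Finset.sum_mul_sum, sum_piFinset_succ']
      refine Finset.sum_congr rfl fun p _ => Finset.sum_congr rfl fun f _ => ?_
      rw [List.ofFn_succ]
      simp only [Fin.cons_zero, Fin.cons_succ, List.prod_cons]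

section Main

variable {A}
variable {R : ℝ}

lemma phi_bound (hR : 0 < R)
    (hsum1 : ∀ α, Summable fun β => ‖(adjoint (A α)).comp (A β)‖ ^ ((1:ℝ)/2))
    (hbd1 : ∀ α, (∑' β, ‖(adjoint (A α)).comp (A β)‖ ^ ((1:ℝ)/2)) ≤ R)
    (hsum2 : ∀ α, Summable fun β => ‖(A α).comp (adjoint (A β))‖ ^ ((1:ℝ)/2))
    (hbd2 : ∀ α, (∑' β, ‖(A α).comp (adjoint (A β))‖ ^ ((1:ℝ)/2)) ≤ R)
    (S : Finset ℕ) :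
    ∀ (m : ℕ) (b : ℕ),
      (∑ f ∈ Fintype.piFinset (fun _ : Fin m => S ×ˢ S),
        Real.sqrt (chain A b (List.ofFn fun i => f i))) ≤ R ^ (2*m) * Real.sqrt R
  | 0, b => by
      rw [sum_piFinset_zero']
      have h1 : (List.ofFn fun i : Fin 0 => (i.elim0 : ℕ × ℕ)) = [] := by simp
      rw [h1]
      have h2 : chain A b [] = ‖A b‖ := rfl
      rw [h2, Nat.mul_zero, pow_zero, one_mul]
      exact Real.sqrt_le_sqrt (norm_A_le hsum1 hbd1 b)
  | m + 1, b => by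
      have hK : (0:ℝ) ≤ R ^ (2*m) * Real.sqrt R := by positivity
      rw [sum_piFinset_succ']
      have key : ∀ p ∈ S ×ˢ S,
          (∑ f ∈ Fintype.piFinset (fun _ : Fin m => S ×ˢ S),
            Real.sqrt (chain A b (List.ofFn fun i => (Fin.cons p f : Fin (m+1) → ℕ × ℕ) i)))
          ≤ Real.sqrt (dd A b p.1) * (Real.sqrt (cc A p.1 p.2) * (R ^ (2*m) * Real.sqrt R)) := by
        intro p _
        have heq : ∀ f : Fin m → ℕ × ℕ,
            Real.sqrt (chain A b (List.ofFn fun i => (Fin.cons p f : Fin (m+1) → ℕ × ℕ) i))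
            = Real.sqrt (dd A b p.1) * (Real.sqrt (cc A p.1 p.2) *
                Real.sqrt (chain A p.2 (List.ofFn fun i => f i))) := by
          intro f
          have hl : (List.ofFn fun i => (Fin.cons p f : Fin (m+1) → ℕ × ℕ) i) = p :: (List.ofFn fun i => f i) := by
            rw [List.ofFn_succ]
            simp
          rw [hl]
          have hch : chain A b (p :: (List.ofFn fun i => f i))
              = dd A b p.1 * (cc A p.1 p.2 * chain A p.2 (List.ofFn fun i => f i)) := rfl
          rw [hch, Real.sqrt_mul (dd_nonneg A b p.1), Real.sqrt_mul (cc_nonneg A p.1 p.2)]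
        rw [Finset.sum_congr rfl fun f _ => heq f, ← Finset.mul_sum, ← Finset.mul_sum]
        exact mul_le_mul_of_nonneg_left (mul_le_mul_of_nonneg_left
          (phi_bound hR hsum1 hbd1 hsum2 hbd2 S m p.2) (Real.sqrt_nonneg _))
          (Real.sqrt_nonneg _)
      refine le_trans (Finset.sum_le_sum key) ?_
      rw [Finset.sum_product]
      have step : ∀ a ∈ S,
          (∑ b' ∈ S, Real.sqrt (dd A b a) *
            (Real.sqrt (cc A a b') * (R ^ (2*m) * Real.sqrt R)))
          ≤ Real.sqrt (dd A b a) * (R * (R ^ (2*m) * Real.sqrt R)) := by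
        intro a _
        rw [← Finset.mul_sum, ← Finset.sum_mul]
        exact mul_le_mul_of_nonneg_left
          (mul_le_mul_of_nonneg_right (row_cc_le hsum1 hbd1 a S) hK) (Real.sqrt_nonneg _)
      refine le_trans (Finset.sum_le_sum step) ?_
      rw [← Finset.sum_mul]
      refine le_trans (mul_le_mul_of_nonneg_right (row_dd_le hsum2 hbd2 b S)
        (by positivity)) ?_
      have : R * (R * (R ^ (2*m) * Real.sqrt R)) = R ^ (2*(m+1)) * Real.sqrt R := by ring
      rw [this]


lemma sum_norm_pp_le (hR : 0 < R)
    (hsum1 : ∀ α, Summable fun β => ‖(adjoint (A α)).comp (A β)‖ ^ ((1:ℝ)/2))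
    (hbd1 : ∀ α, (∑' β, ‖(adjoint (A α)).comp (A β)‖ ^ ((1:ℝ)/2)) ≤ R)
    (hsum2 : ∀ α, Summable fun β => ‖(A α).comp (adjoint (A β))‖ ^ ((1:ℝ)/2))
    (hbd2 : ∀ α, (∑' β, ‖(A α).comp (adjoint (A β))‖ ^ ((1:ℝ)/2)) ≤ R)
    (S : Finset ℕ) (m : ℕ) :
    (∑ f ∈ Fintype.piFinset (fun _ : Fin (m+1) => S ×ˢ S),
      ‖pp A (List.ofFn fun i => f i)‖) ≤ S.card * R ^ (2*(m+1)) := by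
  have hK : (0:ℝ) ≤ R ^ (2*m) * Real.sqrt R := by positivity
  have per : ∀ f : Fin (m+1) → ℕ × ℕ,
      ‖pp A (List.ofFn fun i => f i)‖ ≤
        Real.sqrt ‖A (f 0).1‖ * (Real.sqrt (cc A (f 0).1 (f 0).2) *
          Real.sqrt (chain A (f 0).2 (List.ofFn fun i => f i.succ))) := by
    intro f
    have hl : (List.ofFn fun i => f i) = f 0 :: (List.ofFn fun i => f i.succ) := by
      rw [List.ofFn_succ]
    rw [hl]
    refine le_trans (norm_pp_le_sqrt A _ _) ?_
    rw [Real.sqrt_mul (norm_nonneg _), Real.sqrt_mul (cc_nonneg A _ _)]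
  refine le_trans (Finset.sum_le_sum fun f _ => per f) ?_
  rw [sum_piFinset_succ']
  have inner_le : ∀ p ∈ S ×ˢ S,
      (∑ f ∈ Fintype.piFinset (fun _ : Fin m => S ×ˢ S),
        Real.sqrt ‖A ((Fin.cons p f : Fin (m+1) → ℕ × ℕ) 0).1‖ *
          (Real.sqrt (cc A ((Fin.cons p f : Fin (m+1) → ℕ × ℕ) 0).1
              ((Fin.cons p f : Fin (m+1) → ℕ × ℕ) 0).2) *
            Real.sqrt (chain A ((Fin.cons p f : Fin (m+1) → ℕ × ℕ) 0).2
              (List.ofFn fun i => (Fin.cons p f : Fin (m+1) → ℕ × ℕ) i.succ))))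
      ≤ Real.sqrt R * (Real.sqrt (cc A p.1 p.2) * (R ^ (2*m) * Real.sqrt R)) := by
    intro p _
    have hsimp : ∀ f : Fin m → ℕ × ℕ,
        Real.sqrt ‖A ((Fin.cons p f : Fin (m+1) → ℕ × ℕ) 0).1‖ *
          (Real.sqrt (cc A ((Fin.cons p f : Fin (m+1) → ℕ × ℕ) 0).1
              ((Fin.cons p f : Fin (m+1) → ℕ × ℕ) 0).2) *
            Real.sqrt (chain A ((Fin.cons p f : Fin (m+1) → ℕ × ℕ) 0).2
              (List.ofFn fun i => (Fin.cons p f : Fin (m+1) → ℕ × ℕ) i.succ)))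
        = Real.sqrt ‖A p.1‖ * (Real.sqrt (cc A p.1 p.2) *
            Real.sqrt (chain A p.2 (List.ofFn fun i => f i))) := by
      intro f
      simp only [Fin.cons_zero, Fin.cons_succ]
    rw [Finset.sum_congr rfl fun f _ => hsimp f, ← Finset.mul_sum, ← Finset.mul_sum]
    have h1 := phi_bound hR hsum1 hbd1 hsum2 hbd2 S m p.2
    have h2 : Real.sqrt ‖A p.1‖ ≤ Real.sqrt R :=
      Real.sqrt_le_sqrt (norm_A_le hsum1 hbd1 _)
    refine mul_le_mul h2 (mul_le_mul_of_nonneg_left h1 (Real.sqrt_nonneg _)) ?_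
      (Real.sqrt_nonneg _)
    exact mul_nonneg (Real.sqrt_nonneg _)
      (Finset.sum_nonneg fun _ _ => Real.sqrt_nonneg _)
  refine le_trans (Finset.sum_le_sum inner_le) ?_
  rw [Finset.sum_product]
  have rowstep : ∀ a ∈ S,
      (∑ b' ∈ S, Real.sqrt R * (Real.sqrt (cc A a b') * (R ^ (2*m) * Real.sqrt R)))
      ≤ R ^ (2*(m+1)) := by
    intro a _
    rw [← Finset.mul_sum, ← Finset.sum_mul]
    refine le_trans (mul_le_mul_of_nonneg_left
      (mul_le_mul_of_nonneg_right (row_cc_le hsum1 hbd1 a S) hK) (Real.sqrt_nonneg _)) ?_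
    have h3 : Real.sqrt R * (R * (R ^ (2*m) * Real.sqrt R))
        = (Real.sqrt R * Real.sqrt R) * (R ^ (2*m) * R) := by ring
    rw [h3, Real.mul_self_sqrt hR.le]
    have h4 : R * (R ^ (2*m) * R) = R ^ (2*(m+1)) := by ring
    rw [h4]
  refine le_trans (Finset.sum_le_sum rowstep) ?_
  rw [Finset.sum_const, nsmul_eq_mul]

lemma finite_opnorm_le (hR : 0 < R)
    (hsum1 : ∀ α, Summable fun β => ‖(adjoint (A α)).comp (A β)‖ ^ ((1:ℝ)/2))
    (hbd1 : ∀ α, (∑' β, ‖(adjoint (A α)).comp (A β)‖ ^ ((1:ℝ)/2)) ≤ R)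
    (hsum2 : ∀ α, Summable fun β => ‖(A α).comp (adjoint (A β))‖ ^ ((1:ℝ)/2))
    (hbd2 : ∀ α, (∑' β, ‖(A α).comp (adjoint (A β))‖ ^ ((1:ℝ)/2)) ≤ R)
    (S : Finset ℕ) : ‖∑ j ∈ S, A j‖ ≤ R := by
  set T : E →L[ℂ] F := ∑ j ∈ S, A j with hT
  set a : E →L[ℂ] E := (adjoint T).comp T with haa
  have ha : a = ∑ p ∈ S ×ˢ S, gg A p := by
    have h1 : adjoint T = ∑ j ∈ S, adjoint (A j) := by
      rw [hT]
      exact map_sum (adjoint : (E →L[ℂ] F) ≃ₗᵢ⋆[ℂ] (F →L[ℂ] E)) A S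
    rw [haa, h1, ContinuousLinearMap.finset_sum_comp, Finset.sum_product]
    refine Finset.sum_congr rfl fun j _ => ?_
    rw [hT, ContinuousLinearMap.comp_finset_sum]
    rfl
  have hsa : IsSelfAdjoint a := by
    rw [IsSelfAdjoint, star_eq_adjoint, haa, adjoint_comp, adjoint_adjoint]
  have hpow : ∀ n : ℕ, ‖T‖ ^ (2^(n+1)) ≤ (S.card : ℝ) * R ^ (2^(n+1)) := by
    intro n
    obtain ⟨m, hm⟩ : ∃ m, 2^n = m + 1 :=
      ⟨2^n - 1, (Nat.succ_pred_eq_of_pos (Nat.pow_pos (n := n) (by norm_num))).symm⟩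
    have hexp : 2^(n+1) = 2*(m+1) := by
      rw [pow_succ, hm]; ring
    rw [hexp]
    have e1 : ‖T‖ ^ (2*(m+1)) = ‖a‖ ^ (m+1) := by
      rw [pow_mul ‖T‖ 2 (m+1)]
      congr 1
      rw [sq, ← norm_adjoint_comp_self T]
    have e2 : ‖a‖ ^ (m+1) = ‖a ^ (m+1)‖ := by
      rw [← hm]
      have h := congrArg (fun x : NNReal => (x : ℝ)) (hsa.nnnorm_pow_two_pow n)
      simp only [NNReal.coe_pow, coe_nnnorm] at h
      exact h.symm
    have e3 : a ^ (m+1) = ∑ f ∈ Fintype.piFinset (fun _ : Fin (m+1) => S ×ˢ S),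
        pp A (List.ofFn fun i => f i) := by
      rw [ha, pow_expand]
      refine Finset.sum_congr rfl fun f _ => ?_
      rw [pp, List.map_ofFn]
      rfl
    rw [e1, e2, e3]
    refine le_trans (norm_sum_le _ _) ?_
    exact sum_norm_pp_le hR hsum1 hbd1 hsum2 hbd2 S m
  by_contra hcon
  push_neg at hcon
  have hq : 1 < ‖T‖ / R := (one_lt_div hR).mpr hcon
  obtain ⟨n, hn⟩ := pow_unbounded_of_one_lt ((S.card : ℝ)) hq
  have h1 : (‖T‖ / R) ^ (2^(n+1)) ≤ (S.card : ℝ) := by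
    rw [div_pow, div_le_iff₀ (pow_pos hR _)]
    exact hpow n
  have h2 : (‖T‖ / R) ^ n ≤ (‖T‖ / R) ^ (2^(n+1)) := by
    refine pow_le_pow_right₀ hq.le ?_
    calc n ≤ 2^n := (Nat.lt_two_pow_self (n := n)).le
      _ ≤ 2^(n+1) := Nat.pow_le_pow_right (by norm_num) (Nat.le_succ n)
  linarith


lemma summable_apply_adjoint_range
    (hsum2 : ∀ α, Summable fun β => ‖(A α).comp (adjoint (A β))‖ ^ ((1:ℝ)/2))
    (hbd2 : ∀ α, (∑' β, ‖(A α).comp (adjoint (A β))‖ ^ ((1:ℝ)/2)) ≤ R)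
    (k : ℕ) (y : F) : Summable fun j => A j (adjoint (A k) y) := by
  refine Summable.of_norm ?_
  have hmaj : ∀ j, ‖A j (adjoint (A k) y)‖ ≤ (R * Real.sqrt (dd A k j)) * ‖y‖ := by
    intro j
    have h1 : ‖A j (adjoint (A k) y)‖ ≤ dd A j k * ‖y‖ := by
      have := ((A j).comp (adjoint (A k))).le_opNorm y
      simpa [dd, ContinuousLinearMap.comp_apply] using this
    refine h1.trans (mul_le_mul_of_nonneg_right ?_ (norm_nonneg _))
    have h2 : dd A j k = Real.sqrt (dd A j k) * Real.sqrt (dd A j k) :=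
      (Real.mul_self_sqrt (dd_nonneg A j k)).symm
    have h3 : Real.sqrt (dd A j k) ≤ R := by
      refine le_trans (Summable.le_tsum (sqrt_dd_summable hsum2 j) k
        (fun i _ => Real.sqrt_nonneg _)) ?_
      have heq : (∑' i, Real.sqrt (dd A j i))
          = ∑' i, ‖(A j).comp (adjoint (A i))‖ ^ ((1:ℝ)/2) := by
        refine tsum_congr fun i => ?_
        rw [dd, Real.sqrt_eq_rpow]
      rw [heq]; exact hbd2 j
    calc dd A j k = Real.sqrt (dd A j k) * Real.sqrt (dd A j k) := h2
      _ ≤ R * Real.sqrt (dd A j k) :=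
          mul_le_mul_of_nonneg_right h3 (Real.sqrt_nonneg _)
      _ = R * Real.sqrt (dd A k j) := by rw [dd_symm]
  refine Summable.of_nonneg_of_le (fun j => norm_nonneg _) hmaj ?_
  have : Summable fun j => Real.sqrt (dd A k j) := by
    have h := sqrt_dd_summable hsum2 k
    exact h
  exact (this.mul_left R).mul_right ‖y‖

lemma summable_apply (hR : 0 < R)
    (hsum1 : ∀ α, Summable fun β => ‖(adjoint (A α)).comp (A β)‖ ^ ((1:ℝ)/2))
    (hbd1 : ∀ α, (∑' β, ‖(adjoint (A α)).comp (A β)‖ ^ ((1:ℝ)/2)) ≤ R)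
    (hsum2 : ∀ α, Summable fun β => ‖(A α).comp (adjoint (A β))‖ ^ ((1:ℝ)/2))
    (hbd2 : ∀ α, (∑' β, ‖(A α).comp (adjoint (A β))‖ ^ ((1:ℝ)/2)) ≤ R)
    (x : E) : Summable fun j => A j x := by
  classical
  set W : Submodule ℂ E :=
    Submodule.span ℂ (⋃ k, Set.range (adjoint (A k) : F →L[ℂ] E)) with hW
  -- every element of the span is good
  have hspan : ∀ w ∈ W, Summable fun j => A j w := by
    intro w hw
    refine Submodule.span_induction ?_ ?_ ?_ ?_ hw
    · rintro v hv
      rw [Set.mem_iUnion] at hv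
      obtain ⟨k, y, rfl⟩ := hv
      exact summable_apply_adjoint_range hsum2 hbd2 k y
    · simpa using summable_zero
    · intro u v _ _ hu hv
      have : (fun j => A j (u + v)) = fun j => A j u + A j v := by
        funext j; rw [map_add]
      rw [this]; exact hu.add hv
    · intro c u _ hu
      have : (fun j => A j (c • u)) = fun j => c • A j u := by
        funext j; rw [map_smul]
      rw [this]; exact hu.const_smul c
  -- every element of the closure of the span is good
  have hclos : ∀ y ∈ closure (W : Set E), Summable fun j => A j y := by
    intro y hy
    rw [summable_iff_vanishing_norm]
    intro ε hε
    have hδ : (0:ℝ) < ε / (2 * (R + 1)) := by positivity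
    obtain ⟨w, hwW, hwy⟩ := Metric.mem_closure_iff.mp hy _ hδ
    obtain ⟨s, hs⟩ := summable_iff_vanishing_norm.mp (hspan w hwW) (ε/2) (by positivity)
    refine ⟨s, fun t ht => ?_⟩
    have hsplit : (∑ j ∈ t, A j y) = (∑ j ∈ t, A j) (y - w) + ∑ j ∈ t, A j w := by
      rw [ContinuousLinearMap.sum_apply]
      rw [← Finset.sum_add_distrib]
      refine Finset.sum_congr rfl fun j _ => ?_
      rw [map_sub]; abel
    rw [hsplit]
    have hb1 : ‖(∑ j ∈ t, A j) (y - w)‖ ≤ R * ‖y - w‖ := by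
      refine le_trans ((∑ j ∈ t, A j).le_opNorm _) ?_
      exact mul_le_mul_of_nonneg_right
        (finite_opnorm_le hR hsum1 hbd1 hsum2 hbd2 t) (norm_nonneg _)
    have hyw : ‖y - w‖ < ε / (2 * (R + 1)) := by
      rw [← dist_eq_norm]; exact hwy
    calc ‖(∑ j ∈ t, A j) (y - w) + ∑ j ∈ t, A j w‖
        ≤ ‖(∑ j ∈ t, A j) (y - w)‖ + ‖∑ j ∈ t, A j w‖ := norm_add_le _ _
      _ < R * ‖y - w‖ + ε/2 := by
          have := hs t ht
          exact add_lt_add_of_le_of_lt hb1 this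
      _ ≤ R * (ε / (2 * (R + 1))) + ε/2 := by
          nlinarith [hyw, hR.le, norm_nonneg (y - w)]
      _ ≤ ε/2 + ε/2 := by
          have h0 : R * (ε / (2 * (R + 1))) ≤ ε/2 := by
            have he : R * (ε / (2 * (R + 1))) = (R * ε) / (2 * (R + 1)) := by ring
            rw [he, div_le_div_iff₀ (by positivity) (by norm_num : (0:ℝ) < 2)]
            nlinarith [hε.le, hR.le]
          linarith
      _ = ε := by ring
  -- decompose x
  haveI : CompleteSpace W.topologicalClosure :=
    W.isClosed_topologicalClosure.completeSpace_coe
  obtain ⟨y, hy, z, hz, hxyz⟩ :=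
    (W.topologicalClosure).exists_add_mem_mem_orthogonal x
  have hzW : z ∈ Wᗮ := Submodule.orthogonal_le W.le_topologicalClosure hz
  have hAz : ∀ j, A j z = 0 := by
    intro j
    have hmem : (adjoint (A j)) (A j z) ∈ W := by
      refine Submodule.subset_span ?_
      rw [Set.mem_iUnion]
      exact ⟨j, ⟨A j z, rfl⟩⟩
    have h0 : ⟪(adjoint (A j)) (A j z), z⟫_ℂ = 0 :=
      (Submodule.mem_orthogonal W z).mp hzW _ hmem
    rw [adjoint_inner_left] at h0
    exact inner_self_eq_zero.mp h0
  have hxy : ∀ j, A j x = A j y := by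
    intro j
    rw [hxyz, map_add, hAz j, add_zero]
  have : (fun j => A j x) = fun j => A j y := funext hxy
  rw [this]
  refine hclos y ?_
  rw [← Submodule.topologicalClosure_coe]
  exact hy

end Main

end CotlarSteinAux

/-- Cotlar–Stein lemma: if a countable family of bounded operators between Hilbert
spaces satisfies `sup_α Σ_β ‖A_α* A_β‖^{1/2} ≤ R` and `sup_α Σ_β ‖A_α A_β*‖^{1/2} ≤ R`,
then `Σ_α A_α` converges strongly to a bounded operator of norm ≤ R. -/
theorem cotlar_stein
    {E F : Type*} [NormedAddCommGroup E] [InnerProductSpace ℂ E] [CompleteSpace E]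
    [NormedAddCommGroup F] [InnerProductSpace ℂ F] [CompleteSpace F]
    (A : ℕ → E →L[ℂ] F) (R : ℝ) (hR : 0 < R)
    (hsum1 : ∀ α, Summable fun β => ‖(ContinuousLinearMap.adjoint (A α)).comp (A β)‖ ^ ((1:ℝ)/2))
    (hbd1 : ∀ α, (∑' β, ‖(ContinuousLinearMap.adjoint (A α)).comp (A β)‖ ^ ((1:ℝ)/2)) ≤ R)
    (hsum2 : ∀ α, Summable fun β => ‖(A α).comp (ContinuousLinearMap.adjoint (A β))‖ ^ ((1:ℝ)/2))
    (hbd2 : ∀ α, (∑' β, ‖(A α).comp (ContinuousLinearMap.adjoint (A β))‖ ^ ((1:ℝ)/2)) ≤ R) :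
    ∃ T : E →L[ℂ] F, (∀ x : E, HasSum (fun α => A α x) (T x)) ∧ ‖T‖ ≤ R := by
  classical
  have hsummable : ∀ x : E, Summable fun j => A j x :=
    fun x => CotlarSteinAux.summable_apply hR hsum1 hbd1 hsum2 hbd2 x
  have hbound : ∀ x : E, ‖∑' j, A j x‖ ≤ R * ‖x‖ := by
    intro x
    have hs := (hsummable x).hasSum
    refine le_of_tendsto hs.norm (Filter.Eventually.of_forall fun s => ?_)
    have h1 : (∑ j ∈ s, A j x) = (∑ j ∈ s, A j) x :=
      (ContinuousLinearMap.sum_apply _ _ _).symm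
    rw [h1]
    exact le_trans ((∑ j ∈ s, A j).le_opNorm x)
      (mul_le_mul_of_nonneg_right
        (CotlarSteinAux.finite_opnorm_le hR hsum1 hbd1 hsum2 hbd2 s) (norm_nonneg x))
  let L : E →ₗ[ℂ] F :=
    { toFun := fun x => ∑' j, A j x
      map_add' := by
        intro u v
        have h1 : (fun j => A j (u + v)) = fun j => A j u + A j v := by
          funext j; rw [map_add]
        simp only [h1, Summable.tsum_add (hsummable u) (hsummable v)]
      map_smul' := by
        intro c u
        have h1 : (fun j => A j (c • u)) = fun j => c • A j u := by
          funext j; rw [map_smul]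
        simp only [h1, Summable.tsum_const_smul c (hsummable u), RingHom.id_apply] }
  refine ⟨LinearMap.mkContinuous L R hbound, fun x => ?_,
    LinearMap.mkContinuous_norm_le L hR.le hbound⟩
  exact (hsummable x).hasSum
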